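/- Let $S$ be a commutative local ring with maximal ideal $\mathfrak{m}$ and algebraically closed residue field, and let $g \in S[u]$ be a monic polynomial of degree $n$. If the reduction of $g$ modulo $\mathfrak{m}$ has at most $r$ distinct roots in the residue field, then the discriminant of $g$ lies in $\mathfrak{m}^{n-r}$. -/

import Mathlib

open Polynomial Finset

/-- The Sylvester matrix of `f` (viewed with coefficients `a_0, ..., a_n`, `a_k = f.coeff (n-k)`)
and `g` (with coefficients `b_0, ..., b_m`): the first `m` rows are shifts of the coefficient
sequence of `f`, the last `n` rows are shifts of the coefficient sequence of `g`. -/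
noncomputable def sylvester (S : Type) [CommRing S] (n m : ℕ) (f g : Polynomial S) :
    Matrix (Fin (n + m)) (Fin (n + m)) S :=
  Matrix.of fun i j =>
    if (i : ℕ) < m then
      (if (i : ℕ) ≤ (j : ℕ) ∧ (j : ℕ) ≤ (i : ℕ) + n then f.coeff (n - ((j : ℕ) - (i : ℕ)))
       else 0)
    else
      (if (i : ℕ) - m ≤ (j : ℕ) ∧ (j : ℕ) ≤ ((i : ℕ) - m) + m then
        g.coeff (m - ((j : ℕ) - ((i : ℕ) - m)))
      else 0)

/-- The discriminant of a polynomial, defined (up to the standard sign) as the determinant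
of the Sylvester matrix of `f` and its derivative. -/
noncomputable def polyDisc (S : Type) [CommRing S] (f : Polynomial S) : S :=
  (-1 : S) ^ (f.natDegree * (f.natDegree - 1) / 2) *
    (sylvester S f.natDegree (f.natDegree - 1) f (Polynomial.derivative f)).det


lemma aux_prod_mem_pow {R : Type*} [CommRing R] {ι : Type*} [DecidableEq ι] (I : Ideal R)
    (s : Finset ι) (f : ι → R) (h : ∀ i ∈ s, f i ∈ I) :
    ∏ i ∈ s, f i ∈ I ^ s.card := by
  induction s using Finset.induction with
  | empty => simp
  | @insert a s hx ih =>
    rw [Finset.prod_insert hx, Finset.card_insert_of_notMem hx, pow_succ']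
    exact Ideal.mul_mem_mul (h _ (Finset.mem_insert_self _ _))
      (ih fun i hi => h i (Finset.mem_insert_of_mem hi))

lemma aux_det_mem_pow {R : Type*} [CommRing R] {N : Type*} [DecidableEq N] [Fintype N]
    (M : Matrix N N R) (I : Ideal R) (T : Finset N) (h : ∀ i ∈ T, ∀ j, M i j ∈ I) :
    M.det ∈ I ^ T.card := by
  rw [Matrix.det_apply']
  refine Ideal.sum_mem _ fun σ _ => Ideal.mul_mem_left _ _ ?_
  have hcard : (T.map σ.symm.toEmbedding).card = T.card := Finset.card_map _
  rw [← hcard, ← Finset.prod_mul_prod_compl (T.map σ.symm.toEmbedding) (fun i => M (σ i) i)]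
  refine Ideal.mul_mem_right _ _ (aux_prod_mem_pow I _ _ fun i hi => ?_)
  obtain ⟨b, hb, rfl⟩ := Finset.mem_map.mp hi
  rw [Equiv.coe_toEmbedding]; rw [σ.apply_symm_apply]; exact h b hb _

lemma aux_conv {R : Type*} [CommRing R] (m n : ℕ) (p f : R[X])
    (hp : ∀ a, m ≤ a → p.coeff a = 0) (hf : ∀ b, n < b → f.coeff b = 0)
    (j : ℕ) (hj : j < n + m) :
    ∑ i ∈ Finset.range m, p.coeff (m - 1 - i) *
      (if i ≤ j ∧ j ≤ i + n then f.coeff (n - (j - i)) else 0)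
      = (p * f).coeff (n + m - 1 - j) := by
  set N := n + m - 1 - j with hN
  have step1 : ∑ i ∈ Finset.range m, p.coeff (m - 1 - i) *
      (if i ≤ j ∧ j ≤ i + n then f.coeff (n - (j - i)) else 0)
      = ∑ a ∈ Finset.range m, (if a ≤ N then p.coeff a * f.coeff (N - a) else 0) := by
    rw [← Finset.sum_range_reflect (fun a => if a ≤ N then p.coeff a * f.coeff (N - a) else 0) m]
    refine Finset.sum_congr rfl fun i hi => ?_
    rw [Finset.mem_range] at hi
    by_cases h1 : i ≤ j ∧ j ≤ i + n
    · rw [if_pos h1, if_pos (by omega)]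
      congr 2
      omega
    · rw [if_neg h1, mul_zero]
      rcases Nat.lt_or_ge j i with h2 | h2
      · by_cases h3 : m - 1 - i ≤ N
        · rw [if_pos h3, hf (N - (m - 1 - i)) (by omega), mul_zero]
        · rw [if_neg h3]
      · have h4 : i + n < j := by omega
        rw [if_neg (by omega)]
  rw [step1, Polynomial.coeff_mul, Finset.Nat.sum_antidiagonal_eq_sum_range_succ_mk]
  set M' := max m (N + 1) with hM'
  have left : ∑ a ∈ Finset.range m, (if a ≤ N then p.coeff a * f.coeff (N - a) else 0)
      = ∑ a ∈ Finset.range M', (if a ≤ N then p.coeff a * f.coeff (N - a) else 0) := by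
    refine Finset.sum_subset (Finset.range_subset_range.2 (le_max_left _ _)) fun a _ ha => ?_
    rw [Finset.mem_range, not_lt] at ha
    rw [hp a ha, zero_mul, ite_self]
  have right : ∑ a ∈ Finset.range (N + 1), p.coeff a * f.coeff (N - a)
      = ∑ a ∈ Finset.range M', (if a ≤ N then p.coeff a * f.coeff (N - a) else 0) := by
    rw [show ∑ a ∈ Finset.range (N + 1), p.coeff a * f.coeff (N - a)
        = ∑ a ∈ Finset.range (N + 1), (if a ≤ N then p.coeff a * f.coeff (N - a) else 0) from
      Finset.sum_congr rfl fun a ha => by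
        rw [if_pos (by rw [Finset.mem_range] at ha; omega)]]
    refine Finset.sum_subset (Finset.range_subset_range.2 (le_max_right _ _)) fun a _ ha => ?_
    rw [Finset.mem_range, not_lt] at ha
    rw [if_neg (by omega)]
  rw [left, right]

lemma aux_row {R : Type} [CommRing R] (n m : ℕ) (f g p q : R[X])
    (hf : ∀ b, n < b → f.coeff b = 0) (hg : ∀ b, m < b → g.coeff b = 0)
    (hp : ∀ a, m ≤ a → p.coeff a = 0) (hq : ∀ a, n ≤ a → q.coeff a = 0)
    (hpq : p * f = q * g) (j : Fin (n + m)) :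
    ∑ i : Fin (n + m), (if (i : ℕ) < m then p.coeff (m - 1 - (i : ℕ))
        else -q.coeff (n - 1 - ((i : ℕ) - m))) * sylvester R n m f g i j = 0 := by
  have hj : (j : ℕ) < n + m := j.isLt
  set F : ℕ → R := fun i =>
    (if i < m then p.coeff (m - 1 - i) else -q.coeff (n - 1 - (i - m))) *
    (if i < m then
      (if i ≤ (j : ℕ) ∧ (j : ℕ) ≤ i + n then f.coeff (n - ((j : ℕ) - i)) else 0)
     else
      (if i - m ≤ (j : ℕ) ∧ (j : ℕ) ≤ (i - m) + m then g.coeff (m - ((j : ℕ) - (i - m))) else 0))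
    with hF
  have hstep : ∀ i : Fin (n + m), (if (i : ℕ) < m then p.coeff (m - 1 - (i : ℕ))
        else -q.coeff (n - 1 - ((i : ℕ) - m))) * sylvester R n m f g i j = F (i : ℕ) := by
    intro i
    simp only [hF, _root_.sylvester, Matrix.of_apply]
  simp only [hstep]
  rw [Fin.sum_univ_eq_sum_range F (n + m), show n + m = m + n from Nat.add_comm n m,
    ← Fin.sum_univ_eq_sum_range F (m + n), Fin.sum_univ_add]
  have h1 : ∑ i : Fin m, F ((Fin.castAdd n i : Fin (m + n)) : ℕ)
      = (p * f).coeff (n + m - 1 - (j : ℕ)) := by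
    rw [← aux_conv m n p f hp hf (j : ℕ) hj, ← Fin.sum_univ_eq_sum_range
      (fun i => p.coeff (m - 1 - i) *
        (if i ≤ (j : ℕ) ∧ (j : ℕ) ≤ i + n then f.coeff (n - ((j : ℕ) - i)) else 0)) m]
    refine Finset.sum_congr rfl fun i _ => ?_
    have : ((Fin.castAdd n i : Fin (m + n)) : ℕ) = (i : ℕ) := rfl
    rw [this, hF]
    simp only [if_pos i.isLt]
  have h2 : ∑ i : Fin n, F ((Fin.natAdd m i : Fin (m + n)) : ℕ)
      = -((q * g).coeff (m + n - 1 - (j : ℕ))) := by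
    rw [← aux_conv n m q g hq hg (j : ℕ) (by omega), ← Finset.sum_neg_distrib,
      ← Fin.sum_univ_eq_sum_range
      (fun i => -(q.coeff (n - 1 - i) *
        (if i ≤ (j : ℕ) ∧ (j : ℕ) ≤ i + m then g.coeff (m - ((j : ℕ) - i)) else 0))) n]
    refine Finset.sum_congr rfl fun i _ => ?_
    have hv : ((Fin.natAdd m i : Fin (m + n)) : ℕ) = m + (i : ℕ) := rfl
    rw [hv, hF]
    simp only [if_neg (by omega : ¬ m + (i : ℕ) < m)]
    have h3 : m + (i : ℕ) - m = (i : ℕ) := by omega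
    rw [h3, neg_mul]
  rw [h1, h2, hpq, show m + n = n + m from Nat.add_comm m n, add_neg_cancel]

open scoped Classical in
/-- Let `S` be a local ring with maximal ideal `𝔪` and algebraically closed residue field,
and `g` a monic polynomial of degree `n` over `S`. If the reduction of `g` mod `𝔪` has at
most `r` distinct roots in the residue field, then the discriminant of `g` lies in
`𝔪^(n-r)`. -/
theorem stmt10 (S : Type) [CommRing S] [IsLocalRing S]
    [IsAlgClosed (IsLocalRing.ResidueField S)] (n r : ℕ) (g : Polynomial S)
    (hmonic : g.Monic) (hdeg : g.natDegree = n)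
    (hroots : (g.map (IsLocalRing.residue S)).roots.toFinset.card ≤ r) :
    polyDisc S g ∈ IsLocalRing.maximalIdeal S ^ (n - r) := by
  classical
  by_cases hrn : n ≤ r
  · rw [Nat.sub_eq_zero_of_le hrn, pow_zero, Ideal.one_eq_top]
    exact Submodule.mem_top
  push_neg at hrn
  set k := IsLocalRing.ResidueField S with hk
  set φ := IsLocalRing.residue S with hφ
  set gb : Polynomial k := g.map φ with hgb
  have hgbm : gb.Monic := hmonic.map φ
  have hgbdeg : gb.natDegree = n := by rw [hgb, hmonic.natDegree_map, hdeg]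
  have hgbne : gb ≠ 0 := hgbm.ne_zero
  set T : Finset k := gb.roots.toFinset with hT
  set K := T.card with hK
  have hKr : K ≤ r := hroots
  set μ : k → ℕ := fun a => Polynomial.rootMultiplicity a gb with hμ
  have hμ1 : ∀ a ∈ T, 1 ≤ μ a := fun a ha => (Polynomial.rootMultiplicity_pos hgbne).mpr
    (Polynomial.isRoot_of_mem_roots (Multiset.mem_toFinset.mp ha))
  have hsplit : gb = (gb.roots.map fun a => X - C a).prod :=
    (IsAlgClosed.splits gb).eq_prod_roots_of_monic hgbm
  have hprod : gb = ∏ a ∈ T, (X - C a) ^ (μ a) := by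
    conv_lhs => rw [hsplit]
    rw [Finset.prod_multiset_map_count]
    exact Finset.prod_congr rfl fun a _ => by rw [Polynomial.count_roots]
  set w : Polynomial k := ∏ a ∈ T, (X - C a) with hw
  set c : Polynomial k := ∏ a ∈ T, (X - C a) ^ (μ a - 1) with hc
  have hcw : gb = c * w := by
    rw [hprod, hc, hw, ← Finset.prod_mul_distrib]
    refine Finset.prod_congr rfl fun a ha => ?_
    rw [← pow_succ]
    congr 1
    have := hμ1 a ha
    omega
  have hcardroots : Multiset.card gb.roots = n := by
    rw [← hgbdeg]
    exact Polynomial.splits_iff_card_roots.mp (IsAlgClosed.splits gb)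
  have hsum : ∑ a ∈ T, μ a = n := by
    rw [← hcardroots, hT, ← Multiset.toFinset_sum_count_eq gb.roots]
    exact Finset.sum_congr rfl fun a _ => by rw [hμ, Polynomial.count_roots]
  have hwmonic : w.Monic := Polynomial.monic_prod_of_monic _ _ fun a _ => Polynomial.monic_X_sub_C a
  have hcmonic : c.Monic :=
    Polynomial.monic_prod_of_monic _ _ fun a _ => (Polynomial.monic_X_sub_C a).pow _
  have hwdeg : w.natDegree = K := by
    rw [hw, Polynomial.natDegree_prod _ _ (fun a _ => Polynomial.X_sub_C_ne_zero a)]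
    simp [Polynomial.natDegree_X_sub_C, hK]
  have hcdeg : c.natDegree = n - K := by
    have h1 : c.natDegree = ∑ a ∈ T, (μ a - 1) := by
      rw [hc, Polynomial.natDegree_prod _ _
        (fun a _ => pow_ne_zero _ (Polynomial.X_sub_C_ne_zero a))]
      exact Finset.sum_congr rfl fun a _ => by
        rw [Polynomial.natDegree_pow, Polynomial.natDegree_X_sub_C, mul_one]
    rw [h1]
    have h2 : ∑ a ∈ T, (μ a - 1 + 1) = ∑ a ∈ T, μ a :=
      Finset.sum_congr rfl fun a ha => by have := hμ1 a ha; omega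
    rw [Finset.sum_add_distrib, Finset.sum_const, smul_eq_mul, mul_one] at h2
    omega
  have hKn : K ≤ n := by
    rw [← hsum]
    calc K = ∑ _a ∈ T, 1 := by rw [Finset.sum_const, smul_eq_mul, mul_one]
    _ ≤ ∑ a ∈ T, μ a := Finset.sum_le_sum hμ1
  have hK1 : 1 ≤ K := by
    obtain ⟨x, hx⟩ := IsAlgClosed.exists_root gb (by
      rw [Polynomial.degree_eq_natDegree hgbne, hgbdeg]
      exact_mod_cast (by omega : n ≠ 0))
    have hxT : x ∈ T := Multiset.mem_toFinset.mpr ((Polynomial.mem_roots hgbne).mpr hx)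
    exact Finset.card_pos.mpr ⟨x, hxT⟩
  set gb' := Polynomial.derivative gb with hgb'
  have hder : gb'.natDegree ≤ n - 1 := by
    have := Polynomial.natDegree_derivative_le gb
    rwa [hgbdeg] at this
  have hcd : c ∣ gb' := by
    rw [hc]
    exact Finset.prod_dvd_of_coprime
      (fun a _ b _ hab =>
        ((Polynomial.pairwise_coprime_X_sub_C Function.injective_id hab).pow))
      (fun a _ => Polynomial.pow_sub_one_dvd_derivative_of_pow_dvd
        (Polynomial.pow_rootMultiplicity_dvd gb a))
  obtain ⟨w', hw'⟩ := hcd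
  have hw'c : ∀ a, K - 1 < a → w'.coeff a = 0 := by
    intro a ha
    by_cases h0 : w' = 0
    · simp [h0]
    · refine Polynomial.coeff_eq_zero_of_natDegree_lt ?_
      have h2 : gb'.natDegree = c.natDegree + w'.natDegree := by
        rw [hw']
        exact Polynomial.natDegree_mul hcmonic.ne_zero h0
      omega
  set m := n - 1 with hm
  set d := n - r with hd
  set Vt : ℕ → ℕ → k := fun t i => if i < m then ((X : Polynomial k) ^ t * w').coeff (m - 1 - i)
      else -(((X : Polynomial k) ^ t * w).coeff (n - 1 - (i - m))) with hVt
  have hgbc : ∀ b, n < b → gb.coeff b = 0 := fun b hb =>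
    Polynomial.coeff_eq_zero_of_natDegree_lt (by omega)
  have hgb'c : ∀ b, m < b → gb'.coeff b = 0 := fun b hb =>
    Polynomial.coeff_eq_zero_of_natDegree_lt (by omega)
  have hpcoeff : ∀ t, t < d → ∀ a, m ≤ a → ((X : Polynomial k) ^ t * w').coeff a = 0 := by
    intro t ht a ha
    rw [show a = (a - t) + t by omega, Polynomial.coeff_X_pow_mul]
    exact hw'c _ (by omega)
  have hqcoeff : ∀ t, t < d → ∀ a, n ≤ a → ((X : Polynomial k) ^ t * w).coeff a = 0 := by
    intro t ht a ha
    rw [show a = (a - t) + t by omega, Polynomial.coeff_X_pow_mul]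
    exact Polynomial.coeff_eq_zero_of_natDegree_lt (by omega)
  have hker : ∀ t, t < d → ∀ j : Fin (n + m),
      ∑ i : Fin (n + m), Vt t (i : ℕ) * sylvester k n m gb gb' i j = 0 := by
    intro t ht j
    have := aux_row n m gb gb' ((X : Polynomial k) ^ t * w') ((X : Polynomial k) ^ t * w)
      hgbc hgb'c (hpcoeff t ht) (hqcoeff t ht) (by rw [hcw, hw']; ring) j
    simpa only [hVt] using this
  set tOf : Fin (n + m) → ℕ := fun i => n - 1 - K - ((i : ℕ) - m) with htOf
  set isPiv : Fin (n + m) → Prop :=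
    fun i => m ≤ (i : ℕ) ∧ (i : ℕ) - m ≤ n - 1 - K ∧ tOf i < d with hisPiv
  set Tp : Finset (Fin (n + m)) := Finset.univ.filter isPiv with hTp
  set Pk : Matrix (Fin (n + m)) (Fin (n + m)) k :=
    Matrix.of (fun i j => if isPiv i then Vt (tOf i) (j : ℕ) else (if i = j then 1 else 0))
    with hPk
  have hcardTp : Tp.card = d := by
    rw [← Finset.card_range d]
    refine Finset.card_bij' (fun i _ => tOf i)
      (fun t _ => (⟨m + ((n - 1 - K) - t), by omega⟩ : Fin (n + m))) ?_ ?_ ?_ ?_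
    · intro i hi
      rw [hTp, Finset.mem_filter, hisPiv] at hi
      exact Finset.mem_range.mpr hi.2.2.2
    · intro t ht
      rw [Finset.mem_range] at ht
      rw [hTp, Finset.mem_filter]
      refine ⟨Finset.mem_univ _, ?_⟩
      simp only [hisPiv, htOf]
      refine ⟨?_, ?_, ?_⟩ <;> omega
    · intro i hi
      rw [hTp, Finset.mem_filter, hisPiv] at hi
      obtain ⟨-, h1, h2, h3⟩ := hi
      apply Fin.ext
      simp only [htOf] at h2 h3 ⊢
      omega
    · intro t ht
      rw [Finset.mem_range] at ht
      simp only [htOf]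
      omega
  have hressurj : Function.Surjective φ := IsLocalRing.residue_surjective
  set lift : k → S := fun x => Function.surjInv hressurj x with hliftd
  have hlift : ∀ x, φ (lift x) = x := fun x => Function.surjInv_eq hressurj x
  set Msyl : Matrix (Fin (n + m)) (Fin (n + m)) S :=
    sylvester S n m g (Polynomial.derivative g) with hMsyl
  set Mbar : Matrix (Fin (n + m)) (Fin (n + m)) k := sylvester k n m gb gb' with hMbar
  have hMres : ∀ i j, φ (Msyl i j) = Mbar i j := by
    intro i j
    simp only [hMsyl, hMbar, _root_.sylvester, Matrix.of_apply]
    split_ifs <;>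
      simp [hgb, hgb', Polynomial.coeff_map, Polynomial.derivative_map]
  set P : Matrix (Fin (n + m)) (Fin (n + m)) S := Matrix.of (fun i j => lift (Pk i j)) with hP
  have hPres : ∀ i j, φ (P i j) = Pk i j := fun i j => hlift _
  have hmemiff : ∀ x : S, φ x = 0 ↔ x ∈ IsLocalRing.maximalIdeal S := by
    intro x
    rw [← IsLocalRing.ker_residue (R := S), RingHom.mem_ker]
  have hPM : ∀ i ∈ Tp, ∀ j, (P * Msyl) i j ∈ IsLocalRing.maximalIdeal S := by
    intro i hi j
    rw [hTp, Finset.mem_filter] at hi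
    refine (hmemiff _).mp ?_
    rw [Matrix.mul_apply, map_sum]
    have hterm : ∀ l, φ (P i l * Msyl l j) = Vt (tOf i) (l : ℕ) * Mbar l j := by
      intro l
      rw [map_mul, hPres, hMres]
      congr 1
      rw [hPk]
      simp only [Matrix.of_apply]
      rw [if_pos hi.2]
    rw [Finset.sum_congr rfl fun l _ => hterm l]
    exact hker (tOf i) hi.2.2.2 j
  haveI : NeZero (n + m) := ⟨by omega⟩
  set μ0 : Fin (n + m) := ⟨m, by omega⟩ with hμ0
  have hvadd : ∀ x : Fin (n + m), ((x + μ0 : Fin (n + m)) : ℕ) = ((x : ℕ) + m) % (n + m) :=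
    fun x => rfl
  have hvalpiv : ∀ x : Fin (n + m), isPiv (x + μ0) →
      (x : ℕ) < n ∧ ((x + μ0 : Fin (n + m)) : ℕ) = (x : ℕ) + m := by
    intro x hx
    rw [hisPiv] at hx
    obtain ⟨h1, h2, h3⟩ := hx
    rw [hvadd] at h1
    have hxn : (x : ℕ) < n := by
      by_contra hcon
      push_neg at hcon
      have hmod : ((x : ℕ) + m) % (n + m) = (x : ℕ) - n := by
        rw [Nat.mod_eq_sub_mod (by omega),
          show (x : ℕ) + m - (n + m) = (x : ℕ) - n by omega]
        exact Nat.mod_eq_of_lt (by omega)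
      rw [hmod] at h1
      omega
    exact ⟨hxn, by rw [hvadd]; exact Nat.mod_eq_of_lt (by omega)⟩
  have hPkdet : Pk.det ≠ 0 := by
    set e : Equiv.Perm (Fin (n + m)) := Equiv.addRight μ0 with he
    rw [← Matrix.det_submatrix_equiv_self e Pk]
    have htri : (Pk.submatrix e e).BlockTriangular id := by
      intro a b hab
      have hab' : (b : ℕ) < (a : ℕ) := hab
      simp only [Matrix.submatrix_apply, he, Equiv.coe_addRight]
      by_cases hpiv : isPiv (a + μ0)
      · obtain ⟨han, hA⟩ := hvalpiv a hpiv
        have h2' : (a : ℕ) ≤ n - 1 - K := by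
          have := hpiv.2.1
          rw [hA] at this
          omega
        have hbn : (b : ℕ) < n := by omega
        have hB : ((b + μ0 : Fin (n + m)) : ℕ) = (b : ℕ) + m := by
          rw [hvadd]
          exact Nat.mod_eq_of_lt (by omega)
        rw [hPk]
        simp only [Matrix.of_apply]
        rw [if_pos hpiv]
        have htv : tOf (a + μ0) = n - 1 - K - (a : ℕ) := by
          simp only [htOf]
          rw [hA]
          omega
        rw [htv]
        simp only [hVt]
        rw [if_neg (by rw [hB]; omega), hB,
          show n - 1 - ((b : ℕ) + m - m) = n - 1 - (b : ℕ) by omega, neg_eq_zero]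
        have hdb : ((X : Polynomial k) ^ (n - 1 - K - (a : ℕ)) * w).natDegree
            ≤ (n - 1 - K - (a : ℕ)) + K := by
          refine le_trans Polynomial.natDegree_mul_le ?_
          rw [Polynomial.natDegree_X_pow, hwdeg]
        exact Polynomial.coeff_eq_zero_of_natDegree_lt (by omega)
      · rw [hPk]
        simp only [Matrix.of_apply]
        rw [if_neg hpiv, if_neg (by
          intro hcon
          have := add_right_cancel hcon
          rw [this] at hab'
          exact lt_irrefl _ hab')]
    rw [Matrix.det_of_upperTriangular htri]
    rw [Finset.prod_ne_zero_iff]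
    intro a _
    simp only [Matrix.submatrix_apply, he, Equiv.coe_addRight, id_eq]
    by_cases hpiv : isPiv (a + μ0)
    · obtain ⟨han, hA⟩ := hvalpiv a hpiv
      have h2' : (a : ℕ) ≤ n - 1 - K := by
        have := hpiv.2.1
        rw [hA] at this
        omega
      rw [hPk]
      simp only [Matrix.of_apply]
      rw [if_pos hpiv]
      have htv : tOf (a + μ0) = n - 1 - K - (a : ℕ) := by
        simp only [htOf]
        rw [hA]
        omega
      rw [htv]
      simp only [hVt]
      rw [if_neg (by rw [hA]; omega), hA]
      have hXw : ((X : Polynomial k) ^ (n - 1 - K - (a : ℕ)) * w).natDegree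
          = (n - 1 - K - (a : ℕ)) + K := by
        rw [Polynomial.natDegree_mul (pow_ne_zero _ Polynomial.X_ne_zero) hwmonic.ne_zero,
          Polynomial.natDegree_X_pow, hwdeg]
      have hmon : ((X : Polynomial k) ^ (n - 1 - K - (a : ℕ)) * w).Monic :=
        (Polynomial.monic_X_pow _).mul hwmonic
      rw [show n - 1 - ((a : ℕ) + m - m) = (n - 1 - K - (a : ℕ)) + K by omega, ← hXw,
        hmon.coeff_natDegree]
      simp
    · rw [hPk]
      simp only [Matrix.of_apply]
      rw [if_neg hpiv]
      simp
  have hPdet : IsUnit P.det := by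
    have hres2 : φ P.det = Pk.det := by
      rw [RingHom.map_det]
      congr 1
      ext i j
      exact hPres i j
    refine IsLocalRing.notMem_maximalIdeal.mp fun hmem => ?_
    exact hPkdet (hres2 ▸ (hmemiff P.det).mpr hmem)
  have hdetmem : Msyl.det ∈ (IsLocalRing.maximalIdeal S) ^ d := by
    have h1 := aux_det_mem_pow (P * Msyl) (IsLocalRing.maximalIdeal S) Tp hPM
    rw [hcardTp, Matrix.det_mul] at h1
    have h2 : Msyl.det = ↑hPdet.unit⁻¹ * (P.det * Msyl.det) := by
      rw [← mul_assoc, IsUnit.val_inv_mul, one_mul]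
    rw [h2]
    exact Ideal.mul_mem_left _ _ h1
  have heq : polyDisc S g = (-1 : S) ^ (g.natDegree * (g.natDegree - 1) / 2) * Msyl.det := by
    rw [hMsyl]
    unfold polyDisc
    rw [hdeg, ← hm]
  rw [heq]
  exact Ideal.mul_mem_left _ _ hdetmem
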